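/- Let (b_j)_{j≥1} be a nonincreasing sequence of nonnegative real numbers, and let p ∈ (0,1) be such that Σ_{j≥1} b_j^p < ∞. Then for every integer s ≥ 1, Σ_{j≥s+1} b_j² ≤ (1/(2/p − 1)) · (Σ_{j≥1} b_j^p)^{2/p} · s^{−2/p + 1}. -/

import Mathlib

set_option maxHeartbeats 800000

open Set MeasureTheory Finset

private lemma tail_rpow_sum_le (q : ℝ) (hq : 1 < q) (s : ℕ) (hs : 1 ≤ s) :
    (∑' n : ℕ, ((n + s + 1 : ℕ) : ℝ) ^ (-q)) ≤ (s : ℝ) ^ (1 - q) / (q - 1) := by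
  have hs0 : (0:ℝ) < s := by exact_mod_cast hs
  apply Real.tsum_le_of_sum_range_le
    (fun n => Real.rpow_nonneg (by positivity) _)
  intro N
  have hanti : AntitoneOn (fun x : ℝ => x ^ (-q)) (Icc (s:ℝ) ((s:ℝ) + N)) := by
    intro x hx y hy hxy
    exact Real.rpow_le_rpow_of_nonpos (lt_of_lt_of_le hs0 hx.1) hxy (by linarith)
  have key := hanti.sum_le_integral
  have hterm : ∀ i ∈ Finset.range N,
      ((i + s + 1 : ℕ) : ℝ) ^ (-q) = (fun x : ℝ => x ^ (-q)) ((s:ℝ) + ((i:ℕ) + 1 : ℕ)) := by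
    intro i _
    push_cast
    ring_nf
  rw [Finset.sum_congr rfl hterm]
  refine key.trans ?_
  have hineq : (∫ x in (s:ℝ)..((s:ℝ) + N), x ^ (-q)) ≤ ∫ x in Ioi (s:ℝ), x ^ (-q) := by
    rw [intervalIntegral.integral_of_le (le_add_of_nonneg_right (Nat.cast_nonneg N))]
    apply setIntegral_mono_set (integrableOn_Ioi_rpow_of_lt (by linarith) hs0)
    · filter_upwards [ae_restrict_mem measurableSet_Ioi] with x hx
      exact Real.rpow_nonneg (le_of_lt (lt_trans hs0 hx)) _
    · exact Filter.Eventually.of_forall fun x hx => hx.1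
  refine hineq.trans ?_
  rw [integral_Ioi_rpow_of_lt (by linarith) hs0]
  rw [show (-q + 1) = -(q - 1) by ring, Real.rpow_neg hs0.le]
  rw [show (1 - q) = -(q - 1) by ring, Real.rpow_neg hs0.le]
  rw [neg_div, div_neg_eq_neg_div, neg_neg]

/-- Tail-sum bound for squares: for a nonincreasing nonnegative sequence `b`
(here `b n` stands for `b_{n+1}` of the paper) with `∑ b_j^p < ∞`, `0 < p < 1`,
`∑_{j ≥ s+1} b_j² ≤ (1/(2/p − 1)) (∑_{j≥1} b_j^p)^{2/p} s^{−2/p+1}`. -/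
theorem stmt3 (b : ℕ → ℝ) (hb : ∀ n, 0 ≤ b n) (hmono : Antitone b)
    (p : ℝ) (hp : 0 < p) (hp1 : p < 1)
    (hsum : Summable fun n => b n ^ p) :
    ∀ s : ℕ, 1 ≤ s →
      (∑' n : ℕ, b (n + s) ^ 2) ≤
        (1 / (2 / p - 1)) * (∑' n : ℕ, b n ^ p) ^ (2 / p) * (s : ℝ) ^ (-2 / p + 1) := by
  intro s hs
  set S := ∑' n : ℕ, b n ^ p with hS
  have hS0 : 0 ≤ S := tsum_nonneg fun n => Real.rpow_nonneg (hb n) p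
  have hq1 : (1:ℝ) < 2 / p := by
    rw [lt_div_iff₀ hp]; linarith
  -- pointwise bound: b j ^ p ≤ S / (j+1)
  have hbp : ∀ j : ℕ, b j ^ p ≤ S / ((j:ℝ) + 1) := by
    intro j
    rw [le_div_iff₀ (by positivity)]
    have h1 : ∑ _i ∈ Finset.range (j+1), b j ^ p ≤ ∑ i ∈ Finset.range (j+1), b i ^ p :=
      Finset.sum_le_sum fun i hi =>
        Real.rpow_le_rpow (hb j) (hmono (Nat.lt_succ_iff.mp (Finset.mem_range.mp hi))) hp.le
    have h2 : ∑ i ∈ Finset.range (j+1), b i ^ p ≤ S :=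
      Summable.sum_le_tsum _ (fun i _ => Real.rpow_nonneg (hb i) p) hsum
    have h3 := h1.trans h2
    rw [Finset.sum_const, Finset.card_range, nsmul_eq_mul] at h3
    calc b j ^ p * ((j:ℝ) + 1) = ((j:ℝ) + 1) * b j ^ p := by ring
    _ = ((j + 1 : ℕ) : ℝ) * b j ^ p := by push_cast; ring
    _ ≤ S := h3
  -- pointwise bound for squares
  have hb2 : ∀ j : ℕ, b j ^ 2 ≤ S ^ (2/p) * (((j + 1 : ℕ)):ℝ) ^ (-(2/p)) := by
    intro j
    have hj1 : (0:ℝ) < (j:ℝ) + 1 := by positivity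
    have e1 : b j ^ 2 = (b j ^ p) ^ (2/p) := by
      rw [← Real.rpow_natCast (b j) 2, ← Real.rpow_mul (hb j)]
      congr 1
      field_simp
      norm_num
    rw [e1]
    calc (b j ^ p) ^ (2/p) ≤ (S / ((j:ℝ) + 1)) ^ (2/p) :=
        Real.rpow_le_rpow (Real.rpow_nonneg (hb j) p) (hbp j) (by positivity)
    _ = S ^ (2/p) * (((j + 1 : ℕ)):ℝ) ^ (-(2/p)) := by
        rw [Real.div_rpow hS0 hj1.le, div_eq_mul_inv, ← Real.rpow_neg hj1.le]
        push_cast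
        ring_nf
  -- summability of the majorant
  have hmaj : Summable (fun n : ℕ => S ^ (2/p) * (((n + s + 1 : ℕ)):ℝ) ^ (-(2/p))) := by
    apply Summable.mul_left
    have h0 : Summable (fun n : ℕ => (n:ℝ) ^ (-(2/p))) :=
      Real.summable_nat_rpow.mpr (by linarith)
    have h1 := (summable_nat_add_iff (f := fun n : ℕ => (n:ℝ) ^ (-(2/p))) (s+1)).mpr h0
    exact h1.congr fun n => by norm_num [add_assoc]
  have hstep : ∀ n : ℕ, b (n + s) ^ 2 ≤ S ^ (2/p) * (((n + s + 1 : ℕ)):ℝ) ^ (-(2/p)) :=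
    fun n => hb2 (n + s)
  have hchain : (∑' n : ℕ, b (n + s) ^ 2) ≤
      ∑' n : ℕ, S ^ (2/p) * (((n + s + 1 : ℕ)):ℝ) ^ (-(2/p)) := by
    apply Summable.tsum_le_tsum hstep _ hmaj
    exact Summable.of_nonneg_of_le (fun n => sq_nonneg _) hstep hmaj
  refine hchain.trans ?_
  rw [tsum_mul_left]
  have htail := tail_rpow_sum_le (2/p) hq1 s hs
  calc S ^ (2/p) * ∑' n : ℕ, ((n + s + 1 : ℕ) : ℝ) ^ (-(2/p))
      ≤ S ^ (2/p) * ((s : ℝ) ^ (1 - 2/p) / (2/p - 1)) := by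
        apply mul_le_mul_of_nonneg_left htail (Real.rpow_nonneg hS0 _)
    _ = (1 / (2 / p - 1)) * S ^ (2 / p) * (s : ℝ) ^ (-2 / p + 1) := by
        rw [show (-2 / p + 1) = 1 - 2/p by ring]
        ring
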